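/- Let H be a two-dimensional complex Hilbert space with orthonormal basis {u, v}, contained as a closed subspace in a complex Hilbert space L. Let W_1, W_2 be bounded operators on L with W_i^* W_j = δ_{ij} I, satisfying W_1^* u = v, W_1^* v = 0, W_2^* u = 0, W_2^* v = u (so that W is an isometric dilation of the tuple R_1, R_2 on H given by R_1 v = u, R_1 u = 0, R_2 u = v, R_2 v = 0, which satisfies R_1 R_1^* + R_2 R_2^* = I), and suppose the closed linear span of {W^α h : h ∈ H, α a word} is L. Then the maximal commuting piece of W is trivial: the only x ∈ L with (W_i^* W_j^* − W_j^* W_i^*)(W^α)^* x = 0 for all i, j ∈ {1,2} and all words α is x = 0. -/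

import Mathlib

open ContinuousLinearMap

noncomputable def wordProd {n : ℕ} {L : Type*} [NormedAddCommGroup L] [InnerProductSpace ℂ L]
    (R : Fin n → L →L[ℂ] L) (α : List (Fin n)) : L →L[ℂ] L :=
  (α.map R).prod

noncomputable def adjWord {L : Type*} [NormedAddCommGroup L] [InnerProductSpace ℂ L]
    [CompleteSpace L] (W : Fin 2 → L →L[ℂ] L) (γ : List (Fin 2)) (z : L) : L :=
  γ.foldr (fun i y => adjoint (W i) y) z

set_option maxHeartbeats 4000000 in
/-- the minimal isometric dilation of the noncommuting 2-tuple
`R₁ = |u⟩⟨v|, R₂ = |v⟩⟨u|` on the two-dimensional space `H = span{u, v}` (which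
satisfies `R₁R₁^* + R₂R₂^* = I`) has trivial maximal commuting piece. -/
theorem stmt19 {L : Type*} [NormedAddCommGroup L] [InnerProductSpace ℂ L] [CompleteSpace L]
    (u v : L) (hu : ‖u‖ = 1) (hv : ‖v‖ = 1) (huv : (inner ℂ u v : ℂ) = 0)
    (W : Fin 2 → L →L[ℂ] L)
    (hisom : ∀ i j : Fin 2, adjoint (W i) ∘L W j = if i = j then 1 else 0)
    (h1u : adjoint (W 0) u = v) (h1v : adjoint (W 0) v = 0)
    (h2u : adjoint (W 1) u = 0) (h2v : adjoint (W 1) v = u)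
    (hmin : (Submodule.span ℂ {x : L | ∃ (α : List (Fin 2)) (h : L),
      h ∈ (Submodule.span ℂ {u, v} : Submodule ℂ L) ∧
      x = wordProd W α h}).topologicalClosure = ⊤) :
    ∀ x : L, (∀ (i j : Fin 2) (α : List (Fin 2)),
      adjoint (W i) (adjoint (W j) (adjoint (wordProd W α) x)) =
      adjoint (W j) (adjoint (W i) (adjoint (wordProd W α) x))) → x = 0 := by
  intro x hx
  have hvu : (inner ℂ v u : ℂ) = 0 := by rw [← inner_conj_symm, huv, map_zero]
  have huu : (inner ℂ u u : ℂ) = 1 := by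
    rw [@inner_self_eq_norm_sq_to_K ℂ, hu]; norm_num
  have hvv : (inner ℂ v v : ℂ) = 1 := by
    rw [@inner_self_eq_norm_sq_to_K ℂ, hv]; norm_num
  -- each W i is an isometry
  have hisoWW : ∀ (i : Fin 2) (z : L), adjoint (W i) (W i z) = z := by
    intro i z
    have := congrArg (fun T : L →L[ℂ] L => T z) (hisom i i)
    simpa using this
  have hisoW : ∀ (i : Fin 2) (z : L), ‖W i z‖ = ‖z‖ := by
    intro i z
    have h1 : (inner ℂ (W i z) (W i z) : ℂ) = inner ℂ z z := by
      rw [← adjoint_inner_right, hisoWW]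
    rw [@inner_self_eq_norm_sq_to_K ℂ, @inner_self_eq_norm_sq_to_K ℂ] at h1
    have h3 := congrArg Complex.re h1
    simp [← Complex.ofReal_pow] at h3
    nlinarith [norm_nonneg (W i z), norm_nonneg z]
  -- adjoint is contractive
  have hadj_le : ∀ (i : Fin 2) (z : L), ‖adjoint (W i) z‖ ≤ ‖z‖ := by
    intro i z
    have h1 : ‖adjoint (W i) z‖ ^ 2 = Complex.re (inner ℂ z (W i (adjoint (W i) z))) := by
      rw [← adjoint_inner_left, @inner_self_eq_norm_sq_to_K ℂ]
      simp [← Complex.ofReal_pow]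
    have h2 : Complex.re (inner ℂ z (W i (adjoint (W i) z))) ≤ ‖z‖ * ‖adjoint (W i) z‖ := by
      calc Complex.re (inner ℂ z (W i (adjoint (W i) z)))
          ≤ ‖(inner ℂ z (W i (adjoint (W i) z)) : ℂ)‖ := Complex.re_le_norm _
        _ ≤ ‖z‖ * ‖W i (adjoint (W i) z)‖ := norm_inner_le_norm _ _
        _ = ‖z‖ * ‖adjoint (W i) z‖ := by rw [hisoW]
    nlinarith [norm_nonneg (adjoint (W i) z), norm_nonneg z]
  -- flip lemma
  have hflip : ∀ (i : Fin 2) (a b : L), (inner ℂ (W i a) b : ℂ) = inner ℂ a (adjoint (W i) b) := by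
    intro i a b
    conv_lhs => rw [← adjoint_adjoint (W i)]
    exact adjoint_inner_left _ _ _
  -- orthogonal ranges inequality
  have hsum : ∀ z : L,
      ‖adjoint (W 0) z‖ ^ 2 + ‖adjoint (W 1) z‖ ^ 2 ≤ ‖z‖ ^ 2 := by
    intro z
    set a := adjoint (W 0) z with ha
    set b := adjoint (W 1) z with hb
    set p := W 0 a + W 1 b with hp
    have hcross : (inner ℂ (W 0 a) (W 1 b) : ℂ) = 0 := by
      rw [hflip]
      have := congrArg (fun T : L →L[ℂ] L => T b) (hisom 0 1)
      simp only [comp_apply] at this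
      rw [this]; simp
    have hcross' : (inner ℂ (W 1 b) (W 0 a) : ℂ) = 0 := by
      rw [← inner_conj_symm, hcross, map_zero]
    have hzp : (inner ℂ z p : ℂ) = inner ℂ a a + inner ℂ b b := by
      rw [hp, inner_add_right]
      congr 1
      · rw [← adjoint_inner_left]
      · rw [← adjoint_inner_left]
    have hpnorm : ‖p‖ ^ 2 = ‖a‖ ^ 2 + ‖b‖ ^ 2 := by
      have : (inner ℂ p p : ℂ) = inner ℂ a a + inner ℂ b b := by
        rw [hp, inner_add_left, inner_add_right, inner_add_right, hcross, hcross']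
        have e0 : (inner ℂ (W 0 a) (W 0 a) : ℂ) = inner ℂ a a := by
          rw [hflip, hisoWW]
        have e1 : (inner ℂ (W 1 b) (W 1 b) : ℂ) = inner ℂ b b := by
          rw [hflip, hisoWW]
        rw [e0, e1]; ring
      have h3 := congrArg Complex.re this
      rw [@inner_self_eq_norm_sq_to_K ℂ, @inner_self_eq_norm_sq_to_K ℂ,
        @inner_self_eq_norm_sq_to_K ℂ] at h3
      simpa [← Complex.ofReal_pow] using h3
    have hre : Complex.re (inner ℂ z p : ℂ) = ‖a‖ ^ 2 + ‖b‖ ^ 2 := by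
      rw [hzp]
      rw [@inner_self_eq_norm_sq_to_K ℂ, @inner_self_eq_norm_sq_to_K ℂ]
      simp [← Complex.ofReal_pow]
    have hcs : Complex.re (inner ℂ z p : ℂ) ≤ ‖z‖ * ‖p‖ := by
      calc Complex.re (inner ℂ z p : ℂ) ≤ ‖(inner ℂ z p : ℂ)‖ := Complex.re_le_norm _
        _ ≤ ‖z‖ * ‖p‖ := norm_inner_le_norm _ _
    nlinarith [norm_nonneg p, norm_nonneg z]
  -- wordProd cons
  have hcons : ∀ (i : Fin 2) (β : List (Fin 2)) (h : L),
      wordProd W (i :: β) h = W i (wordProd W β h) := by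
    intro i β h; simp [wordProd]
  -- density lemma
  have hdense : ∀ z : L, (∀ (α : List (Fin 2)) (h : L),
      h ∈ (Submodule.span ℂ ({u, v} : Set L)) →
      (inner ℂ (wordProd W α h) z : ℂ) = 0) → z = 0 := by
    intro z hz
    have hmem : z ∈ (Submodule.span ℂ {x : L | ∃ (α : List (Fin 2)) (h : L),
        h ∈ (Submodule.span ℂ {u, v} : Submodule ℂ L) ∧
        x = wordProd W α h})ᗮ := by
      rw [Submodule.mem_orthogonal]
      intro s hs
      induction hs using Submodule.span_induction with
      | mem y hy =>
        obtain ⟨α, h, hh, rfl⟩ := hy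
        exact hz α h hh
      | zero => simp
      | add a b _ _ ha hb => rw [inner_add_left, ha, hb]; ring
      | smul c a _ ha => rw [inner_smul_left, ha]; ring
    rw [Submodule.topologicalClosure_eq_top_iff] at hmin
    rw [hmin] at hmem
    simpa using hmem
  -- W 0 v = u and W 1 u = v
  have hconskey : ∀ (i : Fin 2) (w : L),
      (inner ℂ (u - W 0 v) (W i w) : ℂ) = 0 ∧ (inner ℂ (v - W 1 u) (W i w) : ℂ) = 0 := by
    intro i w
    have t3 : ∀ j : Fin 2, adjoint (W j) (W i w) = if j = i then w else 0 := by
      intro j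
      have := congrArg (fun T : L →L[ℂ] L => T w) (hisom j i)
      simp only [comp_apply] at this
      rw [this]
      by_cases hji : j = i
      · simp [hji]
      · simp [hji]
    constructor
    · rw [inner_sub_left, ← adjoint_inner_left (W i) w u, hflip 0 v, t3 0]
      fin_cases i
      · simp [h1u]
      · simp [h2u]
    · rw [inner_sub_left, ← adjoint_inner_left (W i) w v, hflip 1 u, t3 1]
      fin_cases i
      · simp [h1v]
      · simp [h2v]
  have hkey : ∀ (α : List (Fin 2)) (h : L),
      h ∈ (Submodule.span ℂ ({u, v} : Set L)) →
      (inner ℂ (u - W 0 v) (wordProd W α h) : ℂ) = 0 ∧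
      (inner ℂ (v - W 1 u) (wordProd W α h) : ℂ) = 0 := by
    intro α h hh
    induction hh using Submodule.span_induction with
    | mem y hy =>
      simp only [Set.mem_insert_iff, Set.mem_singleton_iff] at hy
      rcases hy with hy | hy
      all_goals rw [hy]
      · -- h = u
        cases α with
        | nil =>
          constructor
          · show (inner ℂ (u - W 0 v) (wordProd W [] u) : ℂ) = 0
            have : wordProd W ([] : List (Fin 2)) u = u := rfl
            rw [this, inner_sub_left, hflip, h1u, huu, hvv]; ring
          · show (inner ℂ (v - W 1 u) (wordProd W [] u) : ℂ) = 0
            have : wordProd W ([] : List (Fin 2)) u = u := rfl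
            rw [this, inner_sub_left, hflip, h2u, hvu]
            simp
        | cons i β =>
          rw [hcons]
          exact hconskey i _
      · -- h = v
        cases α with
        | nil =>
          constructor
          · show (inner ℂ (u - W 0 v) (wordProd W [] v) : ℂ) = 0
            have : wordProd W ([] : List (Fin 2)) v = v := rfl
            rw [this, inner_sub_left, hflip, h1v, huv]
            simp
          · show (inner ℂ (v - W 1 u) (wordProd W [] v) : ℂ) = 0
            have : wordProd W ([] : List (Fin 2)) v = v := rfl
            rw [this, inner_sub_left, hflip, h2v, hvv, huu]; ring
        | cons i β =>
          rw [hcons]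
          exact hconskey i _
    | zero => simp
    | add a b _ _ ha hb =>
      constructor
      · rw [map_add, inner_add_right, ha.1, hb.1]; ring
      · rw [map_add, inner_add_right, ha.2, hb.2]; ring
    | smul c a _ ha =>
      constructor
      · rw [map_smul, inner_smul_right, ha.1]; ring
      · rw [map_smul, inner_smul_right, ha.2]; ring
  have hW0v : W 0 v = u := by
    have h0 : u - W 0 v = 0 := by
      apply hdense
      intro α h hh
      rw [← inner_conj_symm, (hkey α h hh).1, map_zero]
    rw [sub_eq_zero] at h0
    exact h0.symm
  have hW1u : W 1 u = v := by
    have h0 : v - W 1 u = 0 := by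
      apply hdense
      intro α h hh
      rw [← inner_conj_symm, (hkey α h hh).2, map_zero]
    rw [sub_eq_zero] at h0
    exact h0.symm
  -- adjoints of word products are adjoint words
  have hg : ∀ (α : List (Fin 2)) (z : L),
      adjoint (wordProd W α) z = adjWord W α.reverse z := by
    intro α
    induction α with
    | nil =>
      intro z
      have h1 : wordProd W ([] : List (Fin 2)) = 1 := rfl
      rw [h1, one_def, adjoint_id]
      rfl
    | cons i β ih =>
      intro z
      have h1 : wordProd W (i :: β) = W i ∘L wordProd W β := by
        simp [wordProd]; rfl
      rw [h1, adjoint_comp]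
      show adjoint (wordProd W β) (adjoint (W i) z) = _
      rw [ih]
      simp [adjWord, List.foldr_append]
  -- swap symmetry
  have hswap : ∀ (i j : Fin 2) (δ : List (Fin 2)),
      adjWord W (i :: j :: δ) x = adjWord W (j :: i :: δ) x := by
    intro i j δ
    have := hx i j δ.reverse
    rw [hg, List.reverse_reverse] at this
    exact this
  -- norm of adjWord decays along alternating extensions
  have hstep : ∀ δ : List (Fin 2),
      ‖adjWord W ((1 : Fin 2) :: (0 : Fin 2) :: δ) x‖ ^ 2 ≤ ‖adjWord W δ x‖ ^ 2 / 2 := by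
    intro δ
    have e1 : adjWord W ((1 : Fin 2) :: (0 : Fin 2) :: δ) x
        = adjoint (W 1) (adjoint (W 0) (adjWord W δ x)) := rfl
    have e2 : adjWord W ((1 : Fin 2) :: (0 : Fin 2) :: δ) x
        = adjoint (W 0) (adjoint (W 1) (adjWord W δ x)) := by
      rw [hswap]; rfl
    have b1 : ‖adjWord W ((1 : Fin 2) :: (0 : Fin 2) :: δ) x‖
        ≤ ‖adjoint (W 0) (adjWord W δ x)‖ := by
      rw [e1]; exact hadj_le _ _
    have b2 : ‖adjWord W ((1 : Fin 2) :: (0 : Fin 2) :: δ) x‖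
        ≤ ‖adjoint (W 1) (adjWord W δ x)‖ := by
      rw [e2]; exact hadj_le _ _
    have := hsum (adjWord W δ x)
    nlinarith [norm_nonneg (adjWord W ((1 : Fin 2) :: (0 : Fin 2) :: δ) x),
      norm_nonneg (adjoint (W 0) (adjWord W δ x)), norm_nonneg (adjoint (W 1) (adjWord W δ x))]
  -- iterated decay
  have hdecay : ∀ (γ : List (Fin 2)) (k : ℕ),
      ‖adjWord W ((fun δ => (1 : Fin 2) :: (0 : Fin 2) :: δ)^[k] γ) x‖ ^ 2
        ≤ ‖adjWord W γ x‖ ^ 2 / 2 ^ k := by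
    intro γ k
    induction k with
    | zero => simp
    | succ k ih =>
      rw [Function.iterate_succ_apply']
      calc ‖adjWord W ((1 : Fin 2) :: (0 : Fin 2) ::
            (fun δ => (1 : Fin 2) :: (0 : Fin 2) :: δ)^[k] γ) x‖ ^ 2
          ≤ ‖adjWord W ((fun δ => (1 : Fin 2) :: (0 : Fin 2) :: δ)^[k] γ) x‖ ^ 2 / 2 :=
            hstep _
        _ ≤ (‖adjWord W γ x‖ ^ 2 / 2 ^ k) / 2 := by linarith
        _ = ‖adjWord W γ x‖ ^ 2 / 2 ^ (k + 1) := by ring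
  -- shift invariance of inner products with u
  have hshift : ∀ δ : List (Fin 2),
      (inner ℂ (adjWord W δ x) u : ℂ) =
      inner ℂ (adjWord W ((1 : Fin 2) :: (0 : Fin 2) :: δ) x) u := by
    intro δ
    calc (inner ℂ (adjWord W δ x) u : ℂ)
        = inner ℂ (adjWord W δ x) (W 0 v) := by rw [hW0v]
      _ = inner ℂ (adjoint (W 0) (adjWord W δ x)) v := (adjoint_inner_left _ _ _).symm
      _ = inner ℂ (adjWord W ((0 : Fin 2) :: δ) x) v := rfl
      _ = inner ℂ (adjWord W ((0 : Fin 2) :: δ) x) (W 1 u) := by rw [hW1u]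
      _ = inner ℂ (adjoint (W 1) (adjWord W ((0 : Fin 2) :: δ) x)) u :=
          (adjoint_inner_left _ _ _).symm
      _ = inner ℂ (adjWord W ((1 : Fin 2) :: (0 : Fin 2) :: δ) x) u := rfl
  have hiter : ∀ (γ : List (Fin 2)) (k : ℕ),
      (inner ℂ (adjWord W γ x) u : ℂ) =
      inner ℂ (adjWord W ((fun δ => (1 : Fin 2) :: (0 : Fin 2) :: δ)^[k] γ) x) u := by
    intro γ k
    induction k with
    | zero => rfl
    | succ k ih =>
      rw [ih, Function.iterate_succ_apply']
      exact hshift _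
  -- inner products with u vanish
  have hA : ∀ γ : List (Fin 2), (inner ℂ (adjWord W γ x) u : ℂ) = 0 := by
    intro γ
    have hbound : ∀ k : ℕ, ‖(inner ℂ (adjWord W γ x) u : ℂ)‖ ^ 2
        ≤ ‖adjWord W γ x‖ ^ 2 / 2 ^ k := by
      intro k
      rw [hiter γ k]
      calc ‖(inner ℂ (adjWord W ((fun δ => (1 : Fin 2) :: (0 : Fin 2) :: δ)^[k] γ) x) u : ℂ)‖ ^ 2
          ≤ (‖adjWord W ((fun δ => (1 : Fin 2) :: (0 : Fin 2) :: δ)^[k] γ) x‖ * ‖u‖) ^ 2 := by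
            have := norm_inner_le_norm (𝕜 := ℂ)
              (adjWord W ((fun δ => (1 : Fin 2) :: (0 : Fin 2) :: δ)^[k] γ) x) u
            have h0 := norm_nonneg
              ((inner ℂ (adjWord W ((fun δ => (1 : Fin 2) :: (0 : Fin 2) :: δ)^[k] γ) x) u : ℂ))
            nlinarith
        _ = ‖adjWord W ((fun δ => (1 : Fin 2) :: (0 : Fin 2) :: δ)^[k] γ) x‖ ^ 2 := by
            rw [hu]; ring
        _ ≤ ‖adjWord W γ x‖ ^ 2 / 2 ^ k := hdecay γ k
    have htend : Filter.Tendsto (fun k : ℕ => ‖adjWord W γ x‖ ^ 2 / 2 ^ k)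
        Filter.atTop (nhds 0) := by
      have h2 : Filter.Tendsto (fun k : ℕ => ((1 : ℝ) / 2) ^ k) Filter.atTop (nhds 0) :=
        tendsto_pow_atTop_nhds_zero_of_lt_one (by norm_num) (by norm_num)
      have := h2.const_mul (‖adjWord W γ x‖ ^ 2)
      simpa [div_eq_mul_inv, inv_pow, mul_comm] using this
    have hle : ‖(inner ℂ (adjWord W γ x) u : ℂ)‖ ^ 2 ≤ 0 :=
      ge_of_tendsto' htend hbound
    have : ‖(inner ℂ (adjWord W γ x) u : ℂ)‖ = 0 := by
      nlinarith [norm_nonneg ((inner ℂ (adjWord W γ x) u : ℂ))]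
    exact norm_eq_zero.mp this
  have hB : ∀ γ : List (Fin 2), (inner ℂ (adjWord W γ x) v : ℂ) = 0 := by
    intro γ
    calc (inner ℂ (adjWord W γ x) v : ℂ)
        = inner ℂ (adjWord W γ x) (W 1 u) := by rw [hW1u]
      _ = inner ℂ (adjoint (W 1) (adjWord W γ x)) u := (adjoint_inner_left _ _ _).symm
      _ = inner ℂ (adjWord W ((1 : Fin 2) :: γ) x) u := rfl
      _ = 0 := hA _
  -- conclude
  apply hdense
  intro α h hh
  have hx0 : (inner ℂ x (wordProd W α h) : ℂ) = 0 := by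
    rw [← adjoint_inner_left, hg]
    induction hh using Submodule.span_induction with
    | mem y hy =>
      rcases hy with rfl | rfl
      · exact hA _
      · exact hB _
    | zero => simp
    | add a b _ _ ha hb => rw [inner_add_right, ha, hb]; ring
    | smul c a _ ha => rw [inner_smul_right, ha]; ring
  rw [← inner_conj_symm, hx0, map_zero]
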